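/- arXiv:2512.22623 — 5 statements merged into one kernel-verified Lean document; each statement's English description precedes it below -/
import Mathlib

section
/- CAFe error recursion: under L-smoothness and bounded dissimilarity (constant B²), the CAFe rescaled average error satisfies E||ē^{k+1}||² ≤ ω E[B²||∇f(x^{k+1})||² - ||∇f(x^k)||²] + 2γωL E||g^k||² + ω E||ē^k||², where g^k = ∇f(x^k) - ē^k and x^{k+1} = x^k - γ g^k. -/
open MeasureTheory

section CafeAux

open Finset

local notation "⟪" x ", " y "⟫" => @inner ℝ _ _ x y

private lemma cafe_sum_integral_le {Ω : Type*} [MeasurableSpace Ω] (μ : Measure Ω)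
    {ι : Type*} (s : Finset ι) (h : ι → Ω → ℝ) (G : Ω → ℝ)
    (hpos : ∀ n ∈ s, ∀ x, 0 ≤ h n x) (hG : Integrable G μ)
    (hle : ∀ x, ∑ n ∈ s, h n x ≤ G x) :
    ∑ n ∈ s, ∫ x, h n x ∂μ ≤ ∫ x, G x ∂μ := by
  classical
  set T := s.filter (fun n => Integrable (h n) μ) with hT
  have hTs : T ⊆ s := filter_subset _ _
  have h1 : ∑ n ∈ s, ∫ x, h n x ∂μ = ∑ n ∈ T, ∫ x, h n x ∂μ := by
    refine (Finset.sum_subset hTs ?_).symm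
    intro n hns hnT
    have : ¬ Integrable (h n) μ := by
      intro hint
      exact hnT (Finset.mem_filter.2 ⟨hns, hint⟩)
    exact integral_undef this
  rw [h1, ← integral_finset_sum T (fun n hn => (Finset.mem_filter.1 hn).2)]
  refine integral_mono (integrable_finset_sum T (fun n hn => (Finset.mem_filter.1 hn).2)) hG ?_
  intro x
  calc ∑ n ∈ T, h n x ≤ ∑ n ∈ s, h n x :=
        Finset.sum_le_sum_of_subset_of_nonneg hTs (fun n hns _ => hpos n hns x)
    _ ≤ G x := hle x

private lemma cafe_norm_sum_sq_le {E : Type*} [NormedAddCommGroup E] {ι : Type*} (s : Finset ι)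
    (v : ι → E) : ‖∑ n ∈ s, v n‖ ^ 2 ≤ (s.card : ℝ) * ∑ n ∈ s, ‖v n‖ ^ 2 := by
  calc ‖∑ n ∈ s, v n‖ ^ 2 ≤ (∑ n ∈ s, ‖v n‖) ^ 2 := by
        have := norm_sum_le s v
        nlinarith [norm_nonneg (∑ n ∈ s, v n),
          Finset.sum_nonneg (fun n (_ : n ∈ s) => norm_nonneg (v n))]
    _ ≤ (s.card : ℝ) * ∑ n ∈ s, ‖v n‖ ^ 2 := by
        simpa using sq_sum_le_card_mul_sum_sq (s := s) (f := fun n => ‖v n‖)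

private lemma cafe_pointwise {d N : ℕ} (hN : 0 < N) (v : Fin N → EuclideanSpace ℝ (Fin d))
    (a b g e : EuclideanSpace ℝ (Fin d)) (B2 L γ : ℝ)
    (hsum : ∑ n : Fin N, v n = (N : ℝ) • a)
    (hdis : ∑ n : Fin N, ‖v n‖ ^ 2 ≤ (N : ℝ) * (B2 * ‖a‖ ^ 2))
    (hg : g = b - e)
    (hlip : ‖a - b‖ ≤ L * (γ * ‖g‖)) :
    ∑ n : Fin N, ‖v n - g‖ ^ 2
      ≤ (N : ℝ) * (B2 * ‖a‖ ^ 2 - ‖b‖ ^ 2 + 2 * γ * L * ‖g‖ ^ 2 + ‖e‖ ^ 2) := by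
  have hNR : (0:ℝ) < N := by exact_mod_cast hN
  have hexp : ∑ n : Fin N, ‖v n - g‖ ^ 2
      = ∑ n : Fin N, ‖v n‖ ^ 2 - 2 * ((N:ℝ) * ⟪a, g⟫) + (N:ℝ) * ‖g‖ ^ 2 := by
    have h1 : ∀ n : Fin N, ‖v n - g‖ ^ 2 = ‖v n‖ ^ 2 - 2 * ⟪v n, g⟫ + ‖g‖ ^ 2 :=
      fun n => norm_sub_sq_real _ _
    rw [Finset.sum_congr rfl (fun n _ => h1 n)]
    rw [Finset.sum_add_distrib, Finset.sum_sub_distrib, ← Finset.mul_sum, ← sum_inner, hsum,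
      real_inner_smul_left, Finset.sum_const, Finset.card_univ, Fintype.card_fin,
      nsmul_eq_mul]
  have hab : ⟪a - b, g⟫ = ⟪a, g⟫ - ⟪b, g⟫ := inner_sub_left _ _ _
  have habs : -(‖a - b‖ * ‖g‖) ≤ ⟪a - b, g⟫ := by
    have := abs_real_inner_le_norm (a - b) g
    cases abs_le.1 this with
    | intro h1 h2 => exact h1
  have hbg : ⟪b, g⟫ = ‖b‖ ^ 2 - ⟪b, e⟫ := by
    rw [hg, inner_sub_right, real_inner_self_eq_norm_sq]
  have hgsq : ‖g‖ ^ 2 = ‖b‖ ^ 2 - 2 * ⟪b, e⟫ + ‖e‖ ^ 2 := by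
    rw [hg]; exact norm_sub_sq_real _ _
  have hgn : (0:ℝ) ≤ ‖g‖ := norm_nonneg g
  nlinarith [mul_le_mul_of_nonneg_right hlip hgn, mul_le_mul_of_nonneg_left habs (le_of_lt hNR)]

end CafeAux

/-- CAFe error recursion: under `L`-smoothness and bounded dissimilarity `B²`,
the CAFe rescaled average error satisfies
`E‖ē^{k+1}‖² ≤ ω E[B²‖∇f(x^{k+1})‖² - ‖∇f(x^k)‖²] + 2γωL E‖g^k‖² + ω E‖ē^k‖²`,
where `g^k = ∇f(x^k) - ē^k` and `x^{k+1} = x^k - γ g^k`, and each client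
compresses `Δ_n^{k+1} - Δ_s^k` with an `ω`-compressor. -/
theorem cafe_error_recursion (d N : ℕ) (hN : 0 < N)
    {Ω : Type*} [MeasurableSpace Ω] (μ : Measure Ω) [IsProbabilityMeasure μ]
    (gn : Fin N → EuclideanSpace ℝ (Fin d) → EuclideanSpace ℝ (Fin d))
    (gf : EuclideanSpace ℝ (Fin d) → EuclideanSpace ℝ (Fin d))
    (L γ B2 ω : ℝ) (hL : 0 < L) (hγ : 0 < γ) (hω0 : 0 < ω) (hω1 : ω < 1) (hB2 : 1 ≤ B2)
    (hgf : ∀ y, gf y = (N : ℝ)⁻¹ • ∑ n : Fin N, gn n y)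
    (hlip : ∀ y z, ‖gf y - gf z‖ ≤ L * ‖y - z‖)
    (hdiss : ∀ y, (N : ℝ)⁻¹ * ∑ n : Fin N, ‖gn n y‖ ^ 2 ≤ B2 * ‖gf y‖ ^ 2)
    (xk ebark gk xk1 : Ω → EuclideanSpace ℝ (Fin d))
    (hgk : ∀ ω', gk ω' = gf (xk ω') - ebark ω')
    (hxk1 : ∀ ω', xk1 ω' = xk ω' - γ • gk ω')
    (en : Fin N → Ω → EuclideanSpace ℝ (Fin d))
    (herr : ∀ n, ∫ ω', ‖en n ω'‖ ^ 2 ∂μ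
      ≤ ω * ∫ ω', ‖(-γ • gn n (xk1 ω')) - (-γ • gk ω')‖ ^ 2 ∂μ)
    (hinte : ∀ n, Integrable (fun ω' => ‖en n ω'‖ ^ 2) μ)
    (hmease : ∀ n, AEStronglyMeasurable (en n) μ)
    (hintg0 : Integrable (fun ω' => ‖gf (xk ω')‖ ^ 2) μ)
    (hintg1 : Integrable (fun ω' => ‖gf (xk1 ω')‖ ^ 2) μ)
    (hintgk : Integrable (fun ω' => ‖gk ω'‖ ^ 2) μ)
    (hintebk : Integrable (fun ω' => ‖ebark ω'‖ ^ 2) μ)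
    (ebark1 : Ω → EuclideanSpace ℝ (Fin d))
    (hebark1 : ∀ ω', ebark1 ω' = (N : ℝ)⁻¹ • ∑ n : Fin N, γ⁻¹ • en n ω') :
    ∫ ω', ‖ebark1 ω'‖ ^ 2 ∂μ
      ≤ ω * ∫ ω', (B2 * ‖gf (xk1 ω')‖ ^ 2 - ‖gf (xk ω')‖ ^ 2) ∂μ
        + 2 * γ * ω * L * ∫ ω', ‖gk ω'‖ ^ 2 ∂μ
        + ω * ∫ ω', ‖ebark ω'‖ ^ 2 ∂μ := by
  have hNR : (0:ℝ) < N := by exact_mod_cast hN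
  have hNne : (N:ℝ) ≠ 0 := ne_of_gt hNR
  have hγne : γ ≠ 0 := ne_of_gt hγ
  -- H : the dominating integrable function
  set H : Ω → ℝ := fun ω' =>
    B2 * ‖gf (xk1 ω')‖ ^ 2 - ‖gf (xk ω')‖ ^ 2 + 2 * γ * L * ‖gk ω'‖ ^ 2 + ‖ebark ω'‖ ^ 2
    with hH_def
  have hH : Integrable H μ :=
    (((hintg1.const_mul B2).sub hintg0).add (hintgk.const_mul (2 * γ * L))).add hintebk
  -- Step A : pointwise Jensen bound for ebark1
  have hptA : ∀ ω', ‖ebark1 ω'‖ ^ 2 ≤ ((N:ℝ) * γ ^ 2)⁻¹ * ∑ n : Fin N, ‖en n ω'‖ ^ 2 := by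
    intro ω'
    rw [hebark1 ω']
    have h1 : (∑ n : Fin N, γ⁻¹ • en n ω') = γ⁻¹ • ∑ n : Fin N, en n ω' :=
      (Finset.smul_sum).symm
    rw [h1, norm_smul, norm_smul]
    have h2 : ‖∑ n : Fin N, en n ω'‖ ^ 2 ≤ (N:ℝ) * ∑ n : Fin N, ‖en n ω'‖ ^ 2 := by
      simpa using cafe_norm_sum_sq_le (Finset.univ : Finset (Fin N)) (fun n => en n ω')
    have h3 : ‖(N:ℝ)⁻¹‖ = (N:ℝ)⁻¹ := by
      rw [Real.norm_eq_abs, abs_of_pos (by positivity)]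
    have h4 : ‖γ⁻¹‖ = γ⁻¹ := by
      rw [Real.norm_eq_abs, abs_of_pos (by positivity)]
    rw [h3, h4, mul_pow, mul_pow]
    calc ((N:ℝ)⁻¹) ^ 2 * ((γ⁻¹) ^ 2 * ‖∑ n : Fin N, en n ω'‖ ^ 2)
        ≤ ((N:ℝ)⁻¹) ^ 2 * ((γ⁻¹) ^ 2 * ((N:ℝ) * ∑ n : Fin N, ‖en n ω'‖ ^ 2)) := by
          have : (0:ℝ) ≤ ((N:ℝ)⁻¹) ^ 2 * (γ⁻¹) ^ 2 := by positivity
          nlinarith [h2]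
      _ = ((N:ℝ) * γ ^ 2)⁻¹ * ∑ n : Fin N, ‖en n ω'‖ ^ 2 := by
          field_simp
  -- integrability of the sum bound
  have hintsum : Integrable (fun ω' => ((N:ℝ) * γ ^ 2)⁻¹ * ∑ n : Fin N, ‖en n ω'‖ ^ 2) μ :=
    (integrable_finset_sum Finset.univ (fun n _ => hinte n)).const_mul _
  have hA : ∫ ω', ‖ebark1 ω'‖ ^ 2 ∂μ
      ≤ ((N:ℝ) * γ ^ 2)⁻¹ * ∑ n : Fin N, ∫ ω', ‖en n ω'‖ ^ 2 ∂μ := by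
    calc ∫ ω', ‖ebark1 ω'‖ ^ 2 ∂μ
        ≤ ∫ ω', ((N:ℝ) * γ ^ 2)⁻¹ * ∑ n : Fin N, ‖en n ω'‖ ^ 2 ∂μ := by
          refine integral_mono_of_nonneg ?_ hintsum ?_
          · exact Filter.Eventually.of_forall (fun ω' => by positivity)
          · exact Filter.Eventually.of_forall (fun ω' => hptA ω')
      _ = ((N:ℝ) * γ ^ 2)⁻¹ * ∑ n : Fin N, ∫ ω', ‖en n ω'‖ ^ 2 ∂μ := by
          rw [integral_const_mul, integral_finset_sum Finset.univ (fun n _ => hinte n)]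
  -- Step B : compressor bound, rewriting the compressed difference
  have hB : ∀ n : Fin N, ∫ ω', ‖en n ω'‖ ^ 2 ∂μ
      ≤ ω * (γ ^ 2 * ∫ ω', ‖gn n (xk1 ω') - gk ω'‖ ^ 2 ∂μ) := by
    intro n
    have heq : ∀ ω', ‖(-γ • gn n (xk1 ω')) - (-γ • gk ω')‖ ^ 2
        = γ ^ 2 * ‖gn n (xk1 ω') - gk ω'‖ ^ 2 := by
      intro ω'
      have : (-γ • gn n (xk1 ω')) - (-γ • gk ω') = (-γ) • (gn n (xk1 ω') - gk ω') := by
        rw [smul_sub]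
      rw [this, norm_smul, Real.norm_eq_abs, abs_neg, abs_of_pos hγ, mul_pow]
    calc ∫ ω', ‖en n ω'‖ ^ 2 ∂μ
        ≤ ω * ∫ ω', ‖(-γ • gn n (xk1 ω')) - (-γ • gk ω')‖ ^ 2 ∂μ := herr n
      _ = ω * (γ ^ 2 * ∫ ω', ‖gn n (xk1 ω') - gk ω'‖ ^ 2 ∂μ) := by
          rw [show (fun ω' => ‖(-γ • gn n (xk1 ω')) - (-γ • gk ω')‖ ^ 2)
              = fun ω' => γ ^ 2 * ‖gn n (xk1 ω') - gk ω'‖ ^ 2 from funext heq,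
            integral_const_mul]
  -- Step C : sum of integrals of pointwise diffs bounded by N ∫ H
  have hC : ∑ n : Fin N, ∫ ω', ‖gn n (xk1 ω') - gk ω'‖ ^ 2 ∂μ
      ≤ (N:ℝ) * ∫ ω', H ω' ∂μ := by
    have := cafe_sum_integral_le μ (Finset.univ : Finset (Fin N))
      (fun n ω' => ‖gn n (xk1 ω') - gk ω'‖ ^ 2) (fun ω' => (N:ℝ) * H ω')
      (fun n _ ω' => by positivity) (hH.const_mul _) ?_
    · calc ∑ n : Fin N, ∫ ω', ‖gn n (xk1 ω') - gk ω'‖ ^ 2 ∂μ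
          ≤ ∫ ω', (N:ℝ) * H ω' ∂μ := this
        _ = (N:ℝ) * ∫ ω', H ω' ∂μ := integral_const_mul _ _
    · intro ω'
      have hsum : ∑ n : Fin N, gn n (xk1 ω') = (N : ℝ) • gf (xk1 ω') := by
        rw [hgf (xk1 ω'), smul_smul, mul_inv_cancel₀ hNne, one_smul]
      have hdis : ∑ n : Fin N, ‖gn n (xk1 ω')‖ ^ 2 ≤ (N : ℝ) * (B2 * ‖gf (xk1 ω')‖ ^ 2) := by
        have := hdiss (xk1 ω')
        have h := mul_le_mul_of_nonneg_left this (le_of_lt hNR)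
        rw [← mul_assoc, mul_inv_cancel₀ hNne, one_mul] at h
        exact h
      have hlip' : ‖gf (xk1 ω') - gf (xk ω')‖ ≤ L * (γ * ‖gk ω'‖) := by
        have h1 := hlip (xk1 ω') (xk ω')
        have h2 : xk1 ω' - xk ω' = -(γ • gk ω') := by
          rw [hxk1 ω']; abel
        rw [h2, norm_neg, norm_smul, Real.norm_eq_abs, abs_of_pos hγ] at h1
        exact h1
      exact cafe_pointwise hN (fun n => gn n (xk1 ω')) (gf (xk1 ω')) (gf (xk ω'))
        (gk ω') (ebark ω') B2 L γ hsum hdis (hgk ω') hlip'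
  -- Combine
  have hmain : ∫ ω', ‖ebark1 ω'‖ ^ 2 ∂μ ≤ ω * ∫ ω', H ω' ∂μ := by
    have hBsum : ∑ n : Fin N, ∫ ω', ‖en n ω'‖ ^ 2 ∂μ
        ≤ ω * γ ^ 2 * ((N:ℝ) * ∫ ω', H ω' ∂μ) := by
      calc ∑ n : Fin N, ∫ ω', ‖en n ω'‖ ^ 2 ∂μ
          ≤ ∑ n : Fin N, ω * (γ ^ 2 * ∫ ω', ‖gn n (xk1 ω') - gk ω'‖ ^ 2 ∂μ) :=
            Finset.sum_le_sum (fun n _ => hB n)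
        _ = ω * γ ^ 2 * ∑ n : Fin N, ∫ ω', ‖gn n (xk1 ω') - gk ω'‖ ^ 2 ∂μ := by
            rw [← Finset.mul_sum]; ring_nf
            rw [Finset.mul_sum, Finset.mul_sum]
            congr 1; funext n; ring
        _ ≤ ω * γ ^ 2 * ((N:ℝ) * ∫ ω', H ω' ∂μ) := by
            have hωγ : (0:ℝ) ≤ ω * γ ^ 2 := by positivity
            exact mul_le_mul_of_nonneg_left hC hωγ
    calc ∫ ω', ‖ebark1 ω'‖ ^ 2 ∂μ
        ≤ ((N:ℝ) * γ ^ 2)⁻¹ * ∑ n : Fin N, ∫ ω', ‖en n ω'‖ ^ 2 ∂μ := hA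
      _ ≤ ((N:ℝ) * γ ^ 2)⁻¹ * (ω * γ ^ 2 * ((N:ℝ) * ∫ ω', H ω' ∂μ)) := by
          have : (0:ℝ) ≤ ((N:ℝ) * γ ^ 2)⁻¹ := by positivity
          exact mul_le_mul_of_nonneg_left hBsum this
      _ = ω * ∫ ω', H ω' ∂μ := by field_simp
  -- split ∫ H
  have hsplit : ∫ ω', H ω' ∂μ
      = ∫ ω', (B2 * ‖gf (xk1 ω')‖ ^ 2 - ‖gf (xk ω')‖ ^ 2) ∂μ
        + 2 * γ * L * ∫ ω', ‖gk ω'‖ ^ 2 ∂μ + ∫ ω', ‖ebark ω'‖ ^ 2 ∂μ := by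
    have h1 : Integrable (fun ω' => B2 * ‖gf (xk1 ω')‖ ^ 2 - ‖gf (xk ω')‖ ^ 2) μ :=
      (hintg1.const_mul B2).sub hintg0
    have h2 : Integrable (fun ω' => 2 * γ * L * ‖gk ω'‖ ^ 2) μ := hintgk.const_mul _
    rw [hH_def]
    have e1 := integral_add (μ := μ) (h1.add h2) hintebk
    have e2 := integral_add (μ := μ) h1 h2
    simp only [Pi.add_apply] at e1 e2
    rw [e1, e2, integral_const_mul]
  exact hmain.trans_eq (by rw [hsplit]; ring)
end

section
/- CAFe Lyapunov decrease: define Ψ^k = E[f(x^k) + γ/(2(1-ω)) ||ē^k||²]. Under L-smoothness, bounded dissimilarity with ωB² < 1, the CAFe error recursion, and γ ≤ (1-ω)/(L(1+ω)), one has Ψ^{k+1} ≤ Ψ^k - γ/(2(1-ω)) E||∇f(x^k)||² + γωB²/(2(1-ω)) E||∇f(x^{k+1})||². -/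
open MeasureTheory

/-- CAFe Lyapunov decrease: with `Ψ^k = E[f(x^k)] + γ/(2(1-ω)) E‖ē^k‖²`, under the
descent inequality, the CAFe error recursion, `ωB² < 1`, and
`γ ≤ (1-ω)/(L(1+ω))`, one has
`Ψ^{k+1} ≤ Ψ^k - γ/(2(1-ω)) E‖∇f(x^k)‖² + γωB²/(2(1-ω)) E‖∇f(x^{k+1})‖²`. -/
theorem cafe_lyapunov_decrease (d : ℕ)
    {Ω : Type*} [MeasurableSpace Ω] (μ : Measure Ω) [IsProbabilityMeasure μ]
    (f : EuclideanSpace ℝ (Fin d) → ℝ)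
    (gf : EuclideanSpace ℝ (Fin d) → EuclideanSpace ℝ (Fin d))
    (L γ B2 ω : ℝ) (k : ℕ)
    (hL : 0 < L) (hγ : 0 < γ) (hω0 : 0 < ω) (hω1 : ω < 1) (hB2 : 1 ≤ B2)
    (hωB : ω * B2 < 1) (hγL : γ ≤ (1 - ω) / (L * (1 + ω)))
    (x ebar : ℕ → Ω → EuclideanSpace ℝ (Fin d))
    (hstep : ∀ j ω', x (j + 1) ω' = x j ω' - γ • (gf (x j ω') - ebar j ω'))
    (hdescent : ∫ ω', f (x (k + 1) ω') ∂μ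
      ≤ ∫ ω', f (x k ω') ∂μ - γ / 2 * ∫ ω', ‖gf (x k ω')‖ ^ 2 ∂μ
        + γ / 2 * ∫ ω', ‖ebar k ω'‖ ^ 2 ∂μ
        - (1 / (2 * γ) - L / 2) * ∫ ω', ‖x (k + 1) ω' - x k ω'‖ ^ 2 ∂μ)
    (hrec : ∫ ω', ‖ebar (k + 1) ω'‖ ^ 2 ∂μ
      ≤ ω * ∫ ω', (B2 * ‖gf (x (k + 1) ω')‖ ^ 2 - ‖gf (x k ω')‖ ^ 2) ∂μ
        + 2 * γ * ω * L * ∫ ω', ‖gf (x k ω') - ebar k ω'‖ ^ 2 ∂μ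
        + ω * ∫ ω', ‖ebar k ω'‖ ^ 2 ∂μ)
    (hintg : ∀ j, Integrable (fun ω' => ‖gf (x j ω')‖ ^ 2) μ)
    (hinte : ∀ j, Integrable (fun ω' => ‖ebar j ω'‖ ^ 2) μ) :
    (∫ ω', f (x (k + 1) ω') ∂μ) + γ / (2 * (1 - ω)) * ∫ ω', ‖ebar (k + 1) ω'‖ ^ 2 ∂μ
      ≤ (∫ ω', f (x k ω') ∂μ) + γ / (2 * (1 - ω)) * ∫ ω', ‖ebar k ω'‖ ^ 2 ∂μ
        - γ / (2 * (1 - ω)) * ∫ ω', ‖gf (x k ω')‖ ^ 2 ∂μ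
        + γ * ω * B2 / (2 * (1 - ω)) * ∫ ω', ‖gf (x (k + 1) ω')‖ ^ 2 ∂μ := by
  have h1ω : (0:ℝ) < 1 - ω := by linarith
  -- notation
  set F1 := ∫ ω', f (x (k + 1) ω') ∂μ with hF1
  set F0 := ∫ ω', f (x k ω') ∂μ with hF0
  set G1 := ∫ ω', ‖gf (x (k + 1) ω')‖ ^ 2 ∂μ with hG1
  set G0 := ∫ ω', ‖gf (x k ω')‖ ^ 2 ∂μ with hG0
  set E1 := ∫ ω', ‖ebar (k + 1) ω'‖ ^ 2 ∂μ with hE1d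
  set E0 := ∫ ω', ‖ebar k ω'‖ ^ 2 ∂μ with hE0d
  set S := ∫ ω', ‖gf (x k ω') - ebar k ω'‖ ^ 2 ∂μ with hSd
  set c := γ / (2 * (1 - ω)) with hc
  have hcpos : 0 < c := by positivity
  have hS : 0 ≤ S := integral_nonneg fun ω' => by positivity
  -- rewrite the step integral
  have hxint : ∫ ω', ‖x (k + 1) ω' - x k ω'‖ ^ 2 ∂μ = γ ^ 2 * S := by
    have hfe : (fun ω' => ‖x (k + 1) ω' - x k ω'‖ ^ 2)
        = fun ω' => γ ^ 2 * ‖gf (x k ω') - ebar k ω'‖ ^ 2 := by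
      funext ω'
      rw [hstep k ω', sub_sub_cancel_left, norm_neg, norm_smul, Real.norm_eq_abs,
        abs_of_pos hγ, mul_pow]
    rw [hfe, integral_const_mul]
  -- descent inequality, division-free
  have hd : F1 ≤ F0 - γ / 2 * G0 + γ / 2 * E0 - (γ / 2 - L * γ ^ 2 / 2) * S := by
    have h := hdescent
    rw [hxint] at h
    have : (1 / (2 * γ) - L / 2) * (γ ^ 2 * S) = (γ / 2 - L * γ ^ 2 / 2) * S := by
      field_simp
    linarith [this ▸ h]
  -- split the recursion integral
  have hsplit : ∫ ω', (B2 * ‖gf (x (k + 1) ω')‖ ^ 2 - ‖gf (x k ω')‖ ^ 2) ∂μ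
      = B2 * G1 - G0 := by
    rw [integral_sub ((hintg (k + 1)).const_mul B2) (hintg k), integral_const_mul]
  have hr : E1 ≤ ω * (B2 * G1 - G0) + 2 * γ * ω * L * S + ω * E0 := by
    have h := hrec
    rw [hsplit] at h
    exact h
  -- coefficient bound from the step-size condition
  have key : γ * (L * (1 + ω)) ≤ 1 - ω := by
    have hpos : (0:ℝ) < L * (1 + ω) := by positivity
    exact (le_div_iff₀ hpos).mp hγL
  have hcoef : 2 * γ * ω * L * c ≤ γ / 2 - L * γ ^ 2 / 2 := by
    have h : 2 * γ * ω * L * γ ≤ (γ / 2 - L * γ ^ 2 / 2) * (2 * (1 - ω)) := by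
      nlinarith [mul_le_mul_of_nonneg_left key hγ.le]
    calc 2 * γ * ω * L * c = 2 * γ * ω * L * γ / (2 * (1 - ω)) := by rw [hc]; ring
      _ ≤ γ / 2 - L * γ ^ 2 / 2 := by
          rw [div_le_iff₀ (by positivity : (0:ℝ) < 2 * (1 - ω))]
          exact h
  -- combine
  have h2 : c * E1 ≤ c * ω * B2 * G1 - c * ω * G0 + 2 * γ * ω * L * c * S + c * ω * E0 := by
    calc c * E1 ≤ c * (ω * (B2 * G1 - G0) + 2 * γ * ω * L * S + ω * E0) :=
          mul_le_mul_of_nonneg_left hr hcpos.le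
      _ = c * ω * B2 * G1 - c * ω * G0 + 2 * γ * ω * L * c * S + c * ω * E0 := by ring
  have hde : γ / 2 + c * ω = c := by
    rw [hc]; field_simp; ring
  have hE0eq : γ / 2 * E0 + c * ω * E0 = c * E0 := by linear_combination E0 * hde
  have hG0eq : γ / 2 * G0 + c * ω * G0 = c * G0 := by linear_combination G0 * hde
  have hSprod : 2 * γ * ω * L * c * S ≤ (γ / 2 - L * γ ^ 2 / 2) * S :=
    mul_le_mul_of_nonneg_right hcoef hS
  have hfinal : γ * ω * B2 / (2 * (1 - ω)) = c * ω * B2 := by rw [hc]; ring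
  rw [hfinal]
  linarith [hd, h2, hE0eq, hG0eq, hSprod]
end

section
/- CAFe convergence: under L-smoothness (f bounded below by f*), bounded dissimilarity with ωB² < 1, initial error ē^0 = 0, and step size γ ≤ (1-ω)/(L(1+ω)), the CAFe iterates satisfy (1/K)∑_{k=0}^{K-1} E||∇f(x^k)||² ≤ 2(f(x^0) - f*)(1-ω)/(γK(1-ωB²)). -/
open MeasureTheory

set_option maxHeartbeats 1000000 in
lemma cafe_seq (L γ fstar B2 ω : ℝ) (K : ℕ)
    (hL : 0 < L) (hγ : 0 < γ) (hγL : γ ≤ (1 - ω) / (L * (1 + ω)))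
    (hω0 : 0 < ω) (hω1 : ω < 1) (hB2 : 1 ≤ B2) (hωB : ω * B2 < 1)
    (F G Ee D : ℕ → ℝ)
    (hA : ∀ k, F (k+1) ≤ F k - γ/2 * G k - (γ/2 - L*γ^2/2) * D k + γ/2 * Ee k)
    (hB : ∀ k, Ee (k+1) ≤ ω*(B2 * G (k+1) - G k) + 2*γ*ω*L * D k + ω * Ee k)
    (hE0 : Ee 0 = 0)
    (hGpos : ∀ k, 0 ≤ G k) (hEpos : ∀ k, 0 ≤ Ee k) (hDpos : ∀ k, 0 ≤ D k)
    (hFlb : fstar ≤ F K)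
    (hGK : G K ≤ 2*L*(F K - fstar)) :
    γ * (1 - ω * B2) * (∑ k ∈ Finset.range K, G k) ≤ 2 * (1 - ω) * (F 0 - fstar) := by
  set SG := ∑ k ∈ Finset.range K, G k with hSG
  set SD := ∑ k ∈ Finset.range K, D k with hSD
  set SE := ∑ k ∈ Finset.range K, Ee k with hSE
  have hSGpos : 0 ≤ SG := Finset.sum_nonneg fun k _ => hGpos k
  have hSDpos : 0 ≤ SD := Finset.sum_nonneg fun k _ => hDpos k
  have hLω : 0 < L * (1 + ω) := by positivity
  have hγL' : γ * (L * (1 + ω)) ≤ 1 - ω := (le_div_iff₀ hLω).mp hγL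
  -- summed descent inequality
  have h1 : F K - F 0 ≤ -(γ/2) * SG - (γ/2 - L*γ^2/2) * SD + γ/2 * SE := by
    calc F K - F 0 = ∑ k ∈ Finset.range K, (F (k+1) - F k) := (Finset.sum_range_sub F K).symm
      _ ≤ ∑ k ∈ Finset.range K, (-(γ/2) * G k - (γ/2 - L*γ^2/2) * D k + γ/2 * Ee k) :=
          Finset.sum_le_sum fun k _ => by linarith [hA k]
      _ = -(γ/2) * SG - (γ/2 - L*γ^2/2) * SD + γ/2 * SE := by
          rw [Finset.sum_add_distrib, Finset.sum_sub_distrib, ← Finset.mul_sum,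
            ← Finset.mul_sum, ← Finset.mul_sum, ← hSG, ← hSD, ← hSE]
  -- summed error recursion
  have hsumE : ∑ k ∈ Finset.range K, Ee (k+1) = SE + Ee K := by
    have h := Finset.sum_range_succ' Ee K
    rw [Finset.sum_range_succ] at h
    rw [hE0] at h
    linarith [h]
  have hsumG : ∑ k ∈ Finset.range K, G (k+1) = SG + G K - G 0 := by
    have h := Finset.sum_range_succ' G K
    rw [Finset.sum_range_succ] at h
    linarith [h]
  have h2 : SE + Ee K ≤ ω * B2 * (SG + G K - G 0) - ω * SG + 2*γ*ω*L * SD + ω * SE := by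
    calc SE + Ee K = ∑ k ∈ Finset.range K, Ee (k+1) := hsumE.symm
      _ ≤ ∑ k ∈ Finset.range K, (ω * B2 * G (k+1) - ω * G k + 2*γ*ω*L * D k + ω * Ee k) :=
          Finset.sum_le_sum fun k _ => by linarith [hB k]
      _ = ω * B2 * (∑ k ∈ Finset.range K, G (k+1)) - ω * SG + 2*γ*ω*L * SD + ω * SE := by
          rw [Finset.sum_add_distrib, Finset.sum_add_distrib, Finset.sum_sub_distrib,
            ← Finset.mul_sum, ← Finset.mul_sum, ← Finset.mul_sum, ← Finset.mul_sum,
            ← hSG, ← hSD, ← hSE]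
      _ = ω * B2 * (SG + G K - G 0) - ω * SG + 2*γ*ω*L * SD + ω * SE := by rw [hsumG]
  have h4 := mul_le_mul_of_nonneg_left h1 (show (0:ℝ) ≤ 1 - ω by linarith)
  have h5 := mul_le_mul_of_nonneg_left h2 (show (0:ℝ) ≤ γ/2 by linarith)
  -- coefficient of SD is nonpositive
  have h6 : (γ^2*ω*L - (γ/2 - L*γ^2/2)*(1-ω)) * SD ≤ 0 := by
    apply mul_nonpos_of_nonpos_of_nonneg _ hSDpos
    nlinarith [hγL', hγ]
  -- G K bound
  have h3 : (γ/2) * (ω * B2) * G K ≤ (1 - ω) * (F K - fstar) := by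
    have hgl : γ * L * (ω * B2) ≤ 1 - ω := by
      nlinarith [hγL', mul_pos hγ hL]
    have hGK' : (γ/2) * (ω * B2) * G K ≤ (γ/2) * (ω * B2) * (2*L*(F K - fstar)) := by
      apply mul_le_mul_of_nonneg_left hGK
      positivity
    nlinarith [mul_le_mul_of_nonneg_right hgl (sub_nonneg.mpr hFlb)]
  have h7 : 0 ≤ γ * Ee K := mul_nonneg hγ.le (hEpos K)
  have h8 : 0 ≤ ω * B2 * γ * G 0 := by
    have h : (0:ℝ) ≤ ω * B2 := by positivity
    have := mul_nonneg (mul_nonneg h hγ.le) (hGpos 0)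
    linarith
  linarith [h4, h5, h6, h3, h7, h8]

lemma descent_pt {d : ℕ} (f : EuclideanSpace ℝ (Fin d) → ℝ)
    (gf : EuclideanSpace ℝ (Fin d) → EuclideanSpace ℝ (Fin d)) (L γ : ℝ) (hγ : 0 < γ)
    (hsmooth : ∀ x y, f y ≤ f x + (inner ℝ (gf x) (y - x) : ℝ) + L / 2 * ‖y - x‖ ^ 2)
    (z e : EuclideanSpace ℝ (Fin d)) :
    f (z - γ • (gf z - e)) ≤ f z - γ/2 * ‖gf z‖^2 - (γ/2 - L*γ^2/2) * ‖gf z - e‖^2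
      + γ/2 * ‖e‖^2 := by
  have hs := hsmooth z (z - γ • (gf z - e))
  rw [sub_sub_cancel_left, inner_neg_right, real_inner_smul_right, norm_neg, norm_smul,
    Real.norm_eq_abs, abs_of_pos hγ] at hs
  have hip : ‖e‖^2 = ‖gf z‖^2 - 2 * (inner ℝ (gf z) (gf z - e) : ℝ) + ‖gf z - e‖^2 := by
    have h := norm_sub_sq_real (gf z) (gf z - e)
    rw [sub_sub_cancel] at h
    linarith
  nlinarith [hs, hip]

lemma grad_pt {d : ℕ} (f : EuclideanSpace ℝ (Fin d) → ℝ)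
    (gf : EuclideanSpace ℝ (Fin d) → EuclideanSpace ℝ (Fin d)) (L fstar : ℝ) (hL : 0 < L)
    (hsmooth : ∀ x y, f y ≤ f x + (inner ℝ (gf x) (y - x) : ℝ) + L / 2 * ‖y - x‖ ^ 2)
    (hlb : ∀ x, fstar ≤ f x) (z : EuclideanSpace ℝ (Fin d)) :
    ‖gf z‖^2 ≤ 2*L*(f z - fstar) := by
  have hs := hsmooth z (z - L⁻¹ • gf z)
  rw [sub_sub_cancel_left, inner_neg_right, real_inner_smul_right,
    real_inner_self_eq_norm_sq, norm_neg, norm_smul, Real.norm_eq_abs,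
    abs_of_pos (inv_pos.mpr hL)] at hs
  have hlb' := hlb (z - L⁻¹ • gf z)
  have key : L/2*(L⁻¹*‖gf z‖)^2 = L⁻¹*‖gf z‖^2/2 := by
    field_simp
  have h2 : L⁻¹*‖gf z‖^2 ≤ 2*(f z - fstar) := by linarith
  have h3 := mul_le_mul_of_nonneg_left h2 hL.le
  have h4 : L * (L⁻¹*‖gf z‖^2) = ‖gf z‖^2 := by
    rw [← mul_assoc, mul_inv_cancel₀ hL.ne', one_mul]
  linarith

/-- CAFe convergence: for `L`-smooth `f` bounded below by `fstar`, with
`ω ∈ (0,1)`, `B² ≥ 1`, `ωB² < 1`, initial error `ē⁰ = 0`, step size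
`γ ≤ (1-ω)/(L(1+ω))`, iterates `x^{k+1} = x^k - γ(∇f(x^k) - ē^k)` and the
CAFe error recursion, one has
`(1/K)∑_{k<K} E‖∇f(x^k)‖² ≤ 2(f(x⁰) - f*)(1-ω)/(γK(1-ωB²))`. -/
theorem cafe_convergence (d : ℕ)
    {Ω : Type*} [MeasurableSpace Ω] (μ : Measure Ω) [IsProbabilityMeasure μ]
    (f : EuclideanSpace ℝ (Fin d) → ℝ)
    (gf : EuclideanSpace ℝ (Fin d) → EuclideanSpace ℝ (Fin d))
    (L γ fstar B2 ω : ℝ) (K : ℕ) (hK : 0 < K)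
    (hL : 0 < L) (hγ : 0 < γ) (hγL : γ ≤ (1 - ω) / (L * (1 + ω)))
    (hω0 : 0 < ω) (hω1 : ω < 1) (hB2 : 1 ≤ B2) (hωB : ω * B2 < 1)
    (hsmooth : ∀ x y, f y ≤ f x + (inner ℝ (gf x) (y - x) : ℝ) + L / 2 * ‖y - x‖ ^ 2)
    (hlb : ∀ x, fstar ≤ f x)
    (x ebar : ℕ → Ω → EuclideanSpace ℝ (Fin d))
    (x0 : EuclideanSpace ℝ (Fin d)) (hx0 : ∀ ω', x 0 ω' = x0)
    (hebar0 : ∀ ω', ebar 0 ω' = 0)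
    (hstep : ∀ k ω', x (k + 1) ω' = x k ω' - γ • (gf (x k ω') - ebar k ω'))
    (hintf : ∀ k, Integrable (fun ω' => f (x k ω')) μ)
    (hintg : ∀ k, Integrable (fun ω' => ‖gf (x k ω')‖ ^ 2) μ)
    (hinte : ∀ k, Integrable (fun ω' => ‖ebar k ω'‖ ^ 2) μ)
    (hintgk : ∀ k, Integrable (fun ω' => ‖gf (x k ω') - ebar k ω'‖ ^ 2) μ)
    (hrec : ∀ k, ∫ ω', ‖ebar (k + 1) ω'‖ ^ 2 ∂μ
      ≤ ω * ∫ ω', (B2 * ‖gf (x (k + 1) ω')‖ ^ 2 - ‖gf (x k ω')‖ ^ 2) ∂μ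
        + 2 * γ * ω * L * ∫ ω', ‖gf (x k ω') - ebar k ω'‖ ^ 2 ∂μ
        + ω * ∫ ω', ‖ebar k ω'‖ ^ 2 ∂μ) :
    (1 / (K : ℝ)) * ∑ k ∈ Finset.range K, ∫ ω', ‖gf (x k ω')‖ ^ 2 ∂μ
      ≤ 2 * (f x0 - fstar) * (1 - ω) / (γ * K * (1 - ω * B2)) := by
  set F : ℕ → ℝ := fun k => ∫ ω', f (x k ω') ∂μ with hF
  set G : ℕ → ℝ := fun k => ∫ ω', ‖gf (x k ω')‖ ^ 2 ∂μ with hG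
  set Ee : ℕ → ℝ := fun k => ∫ ω', ‖ebar k ω'‖ ^ 2 ∂μ with hEe
  set D : ℕ → ℝ := fun k => ∫ ω', ‖gf (x k ω') - ebar k ω'‖ ^ 2 ∂μ with hD
  -- descent inequality in expectation
  have hA : ∀ k, F (k+1) ≤ F k - γ/2 * G k - (γ/2 - L*γ^2/2) * D k + γ/2 * Ee k := by
    intro k
    have hpt : ∀ ω', f (x (k+1) ω') ≤ f (x k ω') - γ/2 * ‖gf (x k ω')‖^2
        - (γ/2 - L*γ^2/2) * ‖gf (x k ω') - ebar k ω'‖^2 + γ/2 * ‖ebar k ω'‖^2 := by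
      intro ω'
      rw [hstep k ω']
      exact descent_pt f gf L γ hγ hsmooth (x k ω') (ebar k ω')
    have i1 : Integrable (fun ω' => f (x k ω') - γ/2 * ‖gf (x k ω')‖^2) μ :=
      (hintf k).sub ((hintg k).const_mul (γ/2))
    have i2 : Integrable (fun ω' => f (x k ω') - γ/2 * ‖gf (x k ω')‖^2
        - (γ/2 - L*γ^2/2) * ‖gf (x k ω') - ebar k ω'‖^2) μ :=
      i1.sub ((hintgk k).const_mul (γ/2 - L*γ^2/2))
    calc F (k+1) ≤ ∫ ω', (f (x k ω') - γ/2 * ‖gf (x k ω')‖^2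
          - (γ/2 - L*γ^2/2) * ‖gf (x k ω') - ebar k ω'‖^2 + γ/2 * ‖ebar k ω'‖^2) ∂μ :=
          integral_mono (hintf (k+1)) (i2.add ((hinte k).const_mul (γ/2))) hpt
      _ = F k - γ/2 * G k - (γ/2 - L*γ^2/2) * D k + γ/2 * Ee k := by
          rw [integral_add i2 ((hinte k).const_mul (γ/2)),
            integral_sub i1 ((hintgk k).const_mul (γ/2 - L*γ^2/2)),
            integral_sub (hintf k) ((hintg k).const_mul (γ/2)),
            integral_const_mul, integral_const_mul, integral_const_mul]
  -- error recursion
  have hB : ∀ k, Ee (k+1) ≤ ω*(B2 * G (k+1) - G k) + 2*γ*ω*L * D k + ω * Ee k := by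
    intro k
    have h := hrec k
    rw [integral_sub ((hintg (k+1)).const_mul B2) (hintg k), integral_const_mul] at h
    exact h
  have hE0 : Ee 0 = 0 := by
    simp only [hEe]
    simp [hebar0]
  have hGpos : ∀ k, 0 ≤ G k := fun k => integral_nonneg fun ω' => by positivity
  have hEpos : ∀ k, 0 ≤ Ee k := fun k => integral_nonneg fun ω' => by positivity
  have hDpos : ∀ k, 0 ≤ D k := fun k => integral_nonneg fun ω' => by positivity
  have hconst : ∀ c : ℝ, ∫ _ω', c ∂μ = c := by
    intro c
    simp [integral_const]
  have hFlb : fstar ≤ F K := by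
    calc fstar = ∫ _ω', fstar ∂μ := (hconst fstar).symm
      _ ≤ F K := integral_mono (integrable_const fstar) (hintf K) fun ω' => hlb _
  have hGK : G K ≤ 2*L*(F K - fstar) := by
    calc G K ≤ ∫ ω', 2*L*(f (x K ω') - fstar) ∂μ :=
          integral_mono (hintg K) (((hintf K).sub (integrable_const fstar)).const_mul (2*L))
            fun ω' => grad_pt f gf L fstar hL hsmooth hlb _
      _ = 2*L*(F K - fstar) := by
          rw [integral_const_mul, integral_sub (hintf K) (integrable_const fstar), hconst]
  have key := cafe_seq L γ fstar B2 ω K hL hγ hγL hω0 hω1 hB2 hωB F G Ee D hA hB hE0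
    hGpos hEpos hDpos hFlb hGK
  have hF0 : F 0 = f x0 := by
    simp only [hF]
    calc (∫ ω', f (x 0 ω') ∂μ) = ∫ _ω', f x0 ∂μ := by
          congr 1
          funext ω'
          rw [hx0]
      _ = f x0 := hconst _
  rw [hF0] at key
  have hKpos : (0:ℝ) < K := Nat.cast_pos.mpr hK
  have hden : (0:ℝ) < γ * K * (1 - ω * B2) :=
    mul_pos (mul_pos hγ hKpos) (by linarith)
  rw [le_div_iff₀ hden]
  have heq : 1 / (K:ℝ) * (∑ k ∈ Finset.range K, G k) * (γ * K * (1 - ω * B2))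
      = γ * (1 - ω * B2) * (∑ k ∈ Finset.range K, G k) := by
    field_simp
  rw [heq]
  linarith
end

section
/- CAFe-S error bound: if the server loss f_s satisfies (1/N)∑_n ||∇f_n(x) - ∇f_s(x)||² ≤ G² (1/N)∑_n ||∇f_n(x)||², and bounded dissimilarity holds with constant B², then compressing Δ_n - Δ_c with an ω-compressor yields average rescaled error E||ē||² ≤ ω G² B² E||∇f(x)||². -/
open MeasureTheory

lemma jensen_norm_avg {d N : ℕ} (hN : 0 < N) (v : Fin N → EuclideanSpace ℝ (Fin d)) :
    ‖(N : ℝ)⁻¹ • ∑ n : Fin N, v n‖ ^ 2 ≤ (N : ℝ)⁻¹ * ∑ n : Fin N, ‖v n‖ ^ 2 := by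
  have hNpos : (0:ℝ) < N := by exact_mod_cast hN
  have h1 : ‖(N : ℝ)⁻¹ • ∑ n : Fin N, v n‖ = (N : ℝ)⁻¹ * ‖∑ n : Fin N, v n‖ := by
    rw [norm_smul, Real.norm_eq_abs, abs_of_pos (by positivity)]
  have h2 : ‖∑ n : Fin N, v n‖ ≤ ∑ n : Fin N, ‖v n‖ := norm_sum_le _ _
  have h3 : (∑ n : Fin N, ‖v n‖) ^ 2 ≤ (N : ℝ) * ∑ n : Fin N, ‖v n‖ ^ 2 := by
    simpa using sq_sum_le_card_mul_sum_sq (s := Finset.univ) (f := fun n => ‖v n‖)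
  calc ‖(N : ℝ)⁻¹ • ∑ n : Fin N, v n‖ ^ 2
      = (N : ℝ)⁻¹ ^ 2 * ‖∑ n : Fin N, v n‖ ^ 2 := by rw [h1]; ring
    _ ≤ (N : ℝ)⁻¹ ^ 2 * (∑ n : Fin N, ‖v n‖) ^ 2 := by
        gcongr
    _ ≤ (N : ℝ)⁻¹ ^ 2 * ((N : ℝ) * ∑ n : Fin N, ‖v n‖ ^ 2) := by gcongr
    _ = (N : ℝ)⁻¹ * ∑ n : Fin N, ‖v n‖ ^ 2 := by field_simp

/-- CAFe-S error bound: if the server gradient `∇f_s` satisfies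
`(1/N)∑ ‖∇f_n(x) - ∇f_s(x)‖² ≤ G² (1/N)∑ ‖∇f_n(x)‖²` and bounded dissimilarity
holds with constant `B²`, then compressing `Δ_n - Δ_c` with an `ω`-compressor
yields average rescaled error `E‖ē‖² ≤ ω G² B² ‖∇f(x)‖²`. -/
theorem cafe_s_error_bound (d N : ℕ) (hN : 0 < N)
    {Ω : Type*} [MeasurableSpace Ω] (μ : Measure Ω) [IsProbabilityMeasure μ]
    (gn : Fin N → EuclideanSpace ℝ (Fin d) → EuclideanSpace ℝ (Fin d))
    (gs gf : EuclideanSpace ℝ (Fin d) → EuclideanSpace ℝ (Fin d))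
    (hgf : ∀ y, gf y = (N : ℝ)⁻¹ • ∑ n : Fin N, gn n y)
    (B2 G2 ω γ : ℝ) (hB2 : 1 ≤ B2) (hG2 : 0 ≤ G2)
    (hω0 : 0 < ω) (hω1 : ω < 1) (hγ : 0 < γ)
    (hdiss : ∀ y, (N : ℝ)⁻¹ * ∑ n : Fin N, ‖gn n y‖ ^ 2 ≤ B2 * ‖gf y‖ ^ 2)
    (hserver : ∀ y, (N : ℝ)⁻¹ * ∑ n : Fin N, ‖gn n y - gs y‖ ^ 2
      ≤ G2 * ((N : ℝ)⁻¹ * ∑ n : Fin N, ‖gn n y‖ ^ 2))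
    (x : EuclideanSpace ℝ (Fin d))
    (e : Fin N → Ω → EuclideanSpace ℝ (Fin d))
    (hmeas : ∀ n, AEStronglyMeasurable (e n) μ)
    (hint : ∀ n, Integrable (fun ω' => ‖e n ω'‖ ^ 2) μ)
    (herr : ∀ n, ∫ ω', ‖e n ω'‖ ^ 2 ∂μ ≤ ω * ‖(-γ • gn n x) - (-γ • gs x)‖ ^ 2)
    (ebar : Ω → EuclideanSpace ℝ (Fin d))
    (hebar : ∀ ω', ebar ω' = (N : ℝ)⁻¹ • ∑ n : Fin N, γ⁻¹ • e n ω') :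
    ∫ ω', ‖ebar ω'‖ ^ 2 ∂μ ≤ ω * G2 * B2 * ‖gf x‖ ^ 2 := by
  set c : ℝ := (N : ℝ)⁻¹ * γ⁻¹ ^ 2 with hc
  have hcpos : 0 < c := by positivity
  -- pointwise Jensen bound
  have hpt : ∀ ω', ‖ebar ω'‖ ^ 2 ≤ c * ∑ n : Fin N, ‖e n ω'‖ ^ 2 := by
    intro ω'
    rw [hebar]
    calc ‖(N : ℝ)⁻¹ • ∑ n : Fin N, γ⁻¹ • e n ω'‖ ^ 2
        ≤ (N : ℝ)⁻¹ * ∑ n : Fin N, ‖γ⁻¹ • e n ω'‖ ^ 2 := jensen_norm_avg hN _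
      _ = c * ∑ n : Fin N, ‖e n ω'‖ ^ 2 := by
          rw [hc, Finset.mul_sum, Finset.mul_sum]
          apply Finset.sum_congr rfl
          intro n _
          rw [norm_smul, Real.norm_eq_abs, abs_of_pos (by positivity : (0:ℝ) < γ⁻¹), mul_pow]
          ring
  have hintg : Integrable (fun ω' => c * ∑ n : Fin N, ‖e n ω'‖ ^ 2) μ := by
    exact ((integrable_finset_sum Finset.univ (fun n _ => hint n)).const_mul c)
  have step1 : ∫ ω', ‖ebar ω'‖ ^ 2 ∂μ ≤ ∫ ω', c * ∑ n : Fin N, ‖e n ω'‖ ^ 2 ∂μ := by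
    apply integral_mono_of_nonneg
    · filter_upwards with ω' using by positivity
    · exact hintg
    · filter_upwards with ω' using hpt ω'
  have step2 : ∫ ω', c * ∑ n : Fin N, ‖e n ω'‖ ^ 2 ∂μ
      = c * ∑ n : Fin N, ∫ ω', ‖e n ω'‖ ^ 2 ∂μ := by
    rw [MeasureTheory.integral_const_mul, integral_finset_sum Finset.univ (fun n _ => hint n)]
  have hγ2 : ∀ n : Fin N, ‖(-γ • gn n x) - (-γ • gs x)‖ ^ 2 = γ ^ 2 * ‖gn n x - gs x‖ ^ 2 := by
    intro n
    have : (-γ • gn n x) - (-γ • gs x) = (-γ) • (gn n x - gs x) := by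
      rw [smul_sub]
    rw [this, norm_smul, Real.norm_eq_abs, abs_neg, abs_of_pos hγ]
    ring
  have step3 : c * ∑ n : Fin N, ∫ ω', ‖e n ω'‖ ^ 2 ∂μ
      ≤ ω * ((N : ℝ)⁻¹ * ∑ n : Fin N, ‖gn n x - gs x‖ ^ 2) := by
    have hsum : ∑ n : Fin N, ∫ ω', ‖e n ω'‖ ^ 2 ∂μ
        ≤ ∑ n : Fin N, ω * (γ ^ 2 * ‖gn n x - gs x‖ ^ 2) := by
      apply Finset.sum_le_sum
      intro n _
      calc ∫ ω', ‖e n ω'‖ ^ 2 ∂μ ≤ ω * ‖(-γ • gn n x) - (-γ • gs x)‖ ^ 2 := herr n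
        _ = ω * (γ ^ 2 * ‖gn n x - gs x‖ ^ 2) := by rw [hγ2 n]
    calc c * ∑ n : Fin N, ∫ ω', ‖e n ω'‖ ^ 2 ∂μ
        ≤ c * ∑ n : Fin N, ω * (γ ^ 2 * ‖gn n x - gs x‖ ^ 2) := by gcongr
      _ = ω * ((N : ℝ)⁻¹ * ∑ n : Fin N, ‖gn n x - gs x‖ ^ 2) := by
          rw [hc, Finset.mul_sum, Finset.mul_sum, Finset.mul_sum]
          congr 1; ext n
          field_simp
  have step4 : ω * ((N : ℝ)⁻¹ * ∑ n : Fin N, ‖gn n x - gs x‖ ^ 2)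
      ≤ ω * G2 * B2 * ‖gf x‖ ^ 2 := by
    calc ω * ((N : ℝ)⁻¹ * ∑ n : Fin N, ‖gn n x - gs x‖ ^ 2)
        ≤ ω * (G2 * ((N : ℝ)⁻¹ * ∑ n : Fin N, ‖gn n x‖ ^ 2)) :=
          mul_le_mul_of_nonneg_left (hserver x) hω0.le
      _ ≤ ω * (G2 * (B2 * ‖gf x‖ ^ 2)) :=
          mul_le_mul_of_nonneg_left (mul_le_mul_of_nonneg_left (hdiss x) hG2) hω0.le
      _ = ω * G2 * B2 * ‖gf x‖ ^ 2 := by ring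
  linarith [step1, step2.le, step3, step4]
end

section
/- CAFe-S convergence: under L-smoothness of f (bounded below by f*), bounded dissimilarity B², server-client dissimilarity G² with ωG²B² < 1, and γ ≤ 1/L, the iterates x^{k+1} = x^k - γ(∇f(x^k) - ē^k) with E||ē^k||² ≤ ωG²B² E||∇f(x^k)||² satisfy (1/K)∑_{k=0}^{K-1} E||∇f(x^k)||² ≤ 2(f(x^0) - f*)/(γK(1 - ωG²B²)). -/
open MeasureTheory

/-- CAFe-S convergence: for `L`-smooth `f` bounded below by `fstar`, step size
`0 < γ ≤ 1/L`, and error sequence with `E‖ē^k‖² ≤ ωG²B² E‖∇f(x^k)‖²`,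
`ωG²B² < 1`, the iterates `x^{k+1} = x^k - γ(∇f(x^k) - ē^k)` satisfy
`(1/K)∑_{k<K} E‖∇f(x^k)‖² ≤ 2(f(x⁰) - f*)/(γK(1 - ωG²B²))`. -/
theorem cafe_s_convergence (d : ℕ)
    {Ω : Type*} [MeasurableSpace Ω] (μ : Measure Ω) [IsProbabilityMeasure μ]
    (f : EuclideanSpace ℝ (Fin d) → ℝ)
    (gf : EuclideanSpace ℝ (Fin d) → EuclideanSpace ℝ (Fin d))
    (L γ fstar B2 G2 ω : ℝ) (K : ℕ) (hK : 0 < K)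
    (hL : 0 < L) (hγ : 0 < γ) (hγL : γ ≤ 1 / L)
    (hc0 : 0 ≤ ω * G2 * B2) (hc1 : ω * G2 * B2 < 1)
    (hsmooth : ∀ x y, f y ≤ f x + (inner ℝ (gf x) (y - x) : ℝ) + L / 2 * ‖y - x‖ ^ 2)
    (hlb : ∀ x, fstar ≤ f x)
    (x : ℕ → Ω → EuclideanSpace ℝ (Fin d))
    (e : ℕ → Ω → EuclideanSpace ℝ (Fin d))
    (x0 : EuclideanSpace ℝ (Fin d)) (hx0 : ∀ ω', x 0 ω' = x0)
    (hstep : ∀ k ω', x (k + 1) ω' = x k ω' - γ • (gf (x k ω') - e k ω'))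
    (hintf : ∀ k, Integrable (fun ω' => f (x k ω')) μ)
    (hintg : ∀ k, Integrable (fun ω' => ‖gf (x k ω')‖ ^ 2) μ)
    (hinte : ∀ k, Integrable (fun ω' => ‖e k ω'‖ ^ 2) μ)
    (herr : ∀ k, ∫ ω', ‖e k ω'‖ ^ 2 ∂μ
      ≤ ω * G2 * B2 * ∫ ω', ‖gf (x k ω')‖ ^ 2 ∂μ) :
    (1 / (K : ℝ)) * ∑ k ∈ Finset.range K, ∫ ω', ‖gf (x k ω')‖ ^ 2 ∂μ
      ≤ 2 * (f x0 - fstar) / (γ * K * (1 - ω * G2 * B2)) := by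

  set c := ω * G2 * B2 with hc
  have hγL' : γ * L ≤ 1 := (le_div_iff₀ hL).mp hγL
  -- pointwise descent
  have hpt : ∀ k w, f (x (k + 1) w)
      ≤ f (x k w) - γ / 2 * ‖gf (x k w)‖ ^ 2 + γ / 2 * ‖e k w‖ ^ 2 := by
    intro k w
    have h := hsmooth (x k w) (x (k + 1) w)
    rw [hstep k w] at h ⊢
    set g := gf (x k w)
    set ee := e k w
    have hd : x k w - γ • (g - ee) - x k w = -(γ • (g - ee)) := by abel
    rw [hd] at h
    have hinner : (inner ℝ g (-(γ • (g - ee))) : ℝ)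
        = -(γ * (‖g‖ ^ 2 - inner ℝ g ee)) := by
      rw [inner_neg_right, inner_smul_right, inner_sub_right,
        real_inner_self_eq_norm_sq]
    have hnorm : ‖-(γ • (g - ee))‖ ^ 2 = γ ^ 2 * ‖g - ee‖ ^ 2 := by
      rw [norm_neg, norm_smul, mul_pow, Real.norm_eq_abs, sq_abs]
    rw [hinner, hnorm] at h
    have hexp : ‖g - ee‖ ^ 2 = ‖g‖ ^ 2 - 2 * inner ℝ g ee + ‖ee‖ ^ 2 := by
      rw [norm_sub_sq_real]
    have hQ : (0:ℝ) ≤ ‖g - ee‖ ^ 2 := sq_nonneg _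
    nlinarith [mul_nonneg (mul_nonneg hγ.le hQ) (sub_nonneg.2 hγL'), hexp]
  -- expectation descent
  have key : ∀ k, ∫ w, f (x (k + 1) w) ∂μ
      ≤ ∫ w, f (x k w) ∂μ - γ / 2 * (1 - c) * ∫ w, ‖gf (x k w)‖ ^ 2 ∂μ := by
    intro k
    have hi3 : Integrable (fun w => γ / 2 * ‖gf (x k w)‖ ^ 2) μ :=
      (hintg k).const_mul _
    have hi1 : Integrable (fun w => f (x k w) - γ / 2 * ‖gf (x k w)‖ ^ 2) μ :=
      (hintf k).sub hi3
    have hi2 : Integrable (fun w => γ / 2 * ‖e k w‖ ^ 2) μ :=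
      (hinte k).const_mul _
    have hint2 : Integrable
        (fun w => f (x k w) - γ / 2 * ‖gf (x k w)‖ ^ 2 + γ / 2 * ‖e k w‖ ^ 2) μ :=
      hi1.add hi2
    have h1 : ∫ w, f (x (k + 1) w) ∂μ
        ≤ ∫ w, (f (x k w) - γ / 2 * ‖gf (x k w)‖ ^ 2 + γ / 2 * ‖e k w‖ ^ 2) ∂μ :=
      integral_mono (hintf (k + 1)) hint2 (fun w => hpt k w)
    rw [integral_add hi1 hi2, integral_sub (hintf k) hi3,
      integral_const_mul, integral_const_mul] at h1
    have h2 : γ / 2 * ∫ w, ‖e k w‖ ^ 2 ∂μ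
        ≤ γ / 2 * (c * ∫ w, ‖gf (x k w)‖ ^ 2 ∂μ) :=
      mul_le_mul_of_nonneg_left (herr k) (by positivity)
    linarith
  -- telescoping
  set S := ∑ k ∈ Finset.range K, ∫ w, ‖gf (x k w)‖ ^ 2 ∂μ with hS
  have htel : γ / 2 * (1 - c) * S ≤ f x0 - fstar := by
    have h1 : ∑ k ∈ Finset.range K, γ / 2 * (1 - c) * ∫ w, ‖gf (x k w)‖ ^ 2 ∂μ
        ≤ ∑ k ∈ Finset.range K,
          ((∫ w, f (x k w) ∂μ) - ∫ w, f (x (k + 1) w) ∂μ) :=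
      Finset.sum_le_sum (fun k _ => by linarith [key k])
    rw [Finset.sum_range_sub' (fun k => ∫ w, f (x k w) ∂μ)] at h1
    rw [← Finset.mul_sum] at h1
    have h0 : ∫ w, f (x 0 w) ∂μ = f x0 := by
      simp [hx0]
    have hKlb : fstar ≤ ∫ w, f (x K w) ∂μ := by
      have := integral_mono (integrable_const fstar) (hintf K)
        (fun w => hlb (x K w))
      simpa using this
    linarith
  have hSnn : 0 ≤ S := Finset.sum_nonneg fun k _ =>
    integral_nonneg fun w => sq_nonneg _
  have hKpos : (0:ℝ) < K := Nat.cast_pos.2 hK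
  have hdenom : 0 < γ * K * (1 - c) := by
    have : 0 < 1 - c := by linarith
    positivity
  rw [le_div_iff₀ hdenom]
  have heq : 1 / (K:ℝ) * S * (γ * K * (1 - c)) = 2 * (γ / 2 * (1 - c) * S) := by
    field_simp
  rw [heq]
  linarith
end
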